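/- Let S ⊆ ℚ × ℚ be a convex set contained in the epigraph E = {(t, y) ∈ ℚ² : y ≥ (t² + t)/2} such that (i, (i² + i)/2) ∈ S for every natural number i. Then the set of extreme points of S is infinite; in particular, S is not an H-polyhedron. -/

import Mathlib

/-- The parabola function `f(t) = (t² + t)/2`. -/
def parab (t : ℚ) : ℚ := (t ^ 2 + t) / 2

/-- The epigraph `E = {(t, y) : y ≥ (t² + t)/2}`. -/
def parabEpigraph : Set (ℚ × ℚ) := {p | parab p.1 ≤ p.2}

/-- An H-polyhedron in `ℚ × ℚ`: a finite intersection of closed half-spaces. -/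
def IsHPolyhedron2 (P : Set (ℚ × ℚ)) : Prop :=
  ∃ (m : ℕ) (a : Fin m → ℚ × ℚ) (b : Fin m → ℚ),
    P = ⋂ i : Fin m, {p : ℚ × ℚ | (a i).1 * p.1 + (a i).2 * p.2 ≤ b i}

/-- A convex subset of the epigraph containing every point `(i, (i² + i)/2)` for `i : ℕ`
has infinitely many extreme points; in particular it is not an H-polyhedron. -/
theorem infinite_extremePoints_and_not_hPolyhedron (S : Set (ℚ × ℚ))
    (hS : Convex ℚ S) (hSE : S ⊆ parabEpigraph)
    (hrun : ∀ i : ℕ, ((i : ℚ), parab (i : ℚ)) ∈ S) :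
    (S.extremePoints ℚ).Infinite ∧ ¬ IsHPolyhedron2 S := by
  constructor
  · -- infinitely many extreme points
    have hext : ∀ i : ℕ, ((i : ℚ), parab (i : ℚ)) ∈ S.extremePoints ℚ := by
      intro i
      refine ⟨hrun i, ?_⟩
      rintro x1 hx1 x2 hx2 ⟨u, v, hu, hv, huv, hsum⟩
      have h1 : parab x1.1 ≤ x1.2 := hSE hx1
      have h2 : parab x2.1 ≤ x2.2 := hSE hx2
      have hc1 : u * x1.1 + v * x2.1 = (i : ℚ) := congrArg Prod.fst hsum
      have hc2 : u * x1.2 + v * x2.2 = parab (i : ℚ) := congrArg Prod.snd hsum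
      -- strict convexity identity
      have key : u * parab x1.1 + v * parab x2.1
          = parab (u * x1.1 + v * x2.1) + u * v * (x1.1 - x2.1) ^ 2 / 2 := by
        have hv' : v = 1 - u := by linarith
        subst hv'
        simp only [parab]; ring
      have heq : (x1.1 - x2.1) ^ 2 ≤ 0 := by
        have h3 : parab (u * x1.1 + v * x2.1) = u * x1.2 + v * x2.2 := by
          rw [hc1, hc2]
        nlinarith [mul_le_mul_of_nonneg_left h1 hu.le,
          mul_le_mul_of_nonneg_left h2 hv.le, mul_pos hu hv]
      have ht : x1.1 = x2.1 := by nlinarith [sq_nonneg (x1.1 - x2.1)]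
      have ht1 : x1.1 = (i : ℚ) := by
        rw [ht] at hc1 ⊢
        nlinarith [hc1]
      have ht2 : x2.1 = (i : ℚ) := ht ▸ ht1
      have hp1 : parab (i : ℚ) ≤ x1.2 := ht1 ▸ h1
      have hp2 : parab (i : ℚ) ≤ x2.2 := ht2 ▸ h2
      have e1 : u * (x1.2 - parab (i : ℚ)) + v * (x2.2 - parab (i : ℚ)) = 0 := by
        linear_combination hc2 - parab (i : ℚ) * huv
      have A : 0 ≤ u * (x1.2 - parab (i : ℚ)) :=
        mul_nonneg hu.le (sub_nonneg.mpr hp1)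
      have B : 0 ≤ v * (x2.2 - parab (i : ℚ)) :=
        mul_nonneg hv.le (sub_nonneg.mpr hp2)
      have hA0 : u * (x1.2 - parab (i : ℚ)) = 0 := by linarith
      have hB0 : v * (x2.2 - parab (i : ℚ)) = 0 := by linarith
      have hy1 : x1.2 = parab (i : ℚ) := by
        rcases mul_eq_zero.mp hA0 with h | h
        · exact absurd h hu.ne'
        · linarith
      have hy2 : x2.2 = parab (i : ℚ) := by
        rcases mul_eq_zero.mp hB0 with h | h
        · exact absurd h hv.ne'
        · linarith
      exact Prod.ext ht1 hy1
    have hinj : Function.Injective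
        (fun i : ℕ => (((i : ℚ), parab (i : ℚ)) : ℚ × ℚ)) := by
      intro i j hij
      have : (i : ℚ) = (j : ℚ) := congrArg Prod.fst hij
      exact_mod_cast this
    exact Set.infinite_of_injective_forall_mem hinj hext
  · -- not an H-polyhedron
    rintro ⟨m, a, b, hP⟩
    have hmem : ∀ p ∈ S, ∀ j : Fin m, (a j).1 * p.1 + (a j).2 * p.2 ≤ b j := by
      intro p hp j
      have := hP ▸ hp
      exact Set.mem_iInter.mp this j
    -- for each sample point, some constraint is violated just below the parabola
    have hviol : ∀ n : Fin (m + 1), ∃ j : Fin m,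
        b j < (a j).1 * ((4 * (n : ℕ) : ℕ) : ℚ)
          + (a j).2 * (parab ((4 * (n : ℕ) : ℕ) : ℚ) - 1) := by
      intro n
      have hq : (((((4 * (n : ℕ) : ℕ) : ℚ)),
          parab ((4 * (n : ℕ) : ℕ) : ℚ) - 1) : ℚ × ℚ) ∉ S := by
        intro hmemS
        have := hSE hmemS
        simp only [parabEpigraph, Set.mem_setOf_eq] at this
        linarith
      rw [hP] at hq
      simp only [Set.mem_iInter, Set.mem_setOf_eq, not_forall, not_le] at hq
      exact hq
    choose F hF using hviol
    have hninj : ¬ Function.Injective F := by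
      intro h
      have := Fintype.card_le_of_injective F h
      simp at this
    rw [Function.not_injective_iff] at hninj
    obtain ⟨n, n', hFeq, hne⟩ := hninj
    have hb1 := hF n
    have hb2 := hF n'
    rw [← hFeq] at hb2
    have hm1 := hmem _ (hrun (4 * (n : ℕ))) (F n)
    have hm3 := hmem _ (hrun (2 * ((n : ℕ) + (n' : ℕ)))) (F n)
    simp only [parab] at hb1 hb2 hm1 hm3
    push_cast at hb1 hb2 hm1 hm3
    have hbeta : (a (F n)).2 < 0 := by nlinarith [hb1, hm1]
    have hgap : (16 : ℚ) ≤ (4 * ((n : ℕ) : ℚ) - 4 * ((n' : ℕ) : ℚ)) ^ 2 := by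
      have hnn : (n : ℕ) ≠ (n' : ℕ) := fun h => hne (Fin.ext h)
      rcases lt_or_gt_of_ne hnn with h | h
      · have : ((n : ℕ) : ℚ) + 1 ≤ ((n' : ℕ) : ℚ) := by exact_mod_cast h
        nlinarith
      · have : ((n' : ℕ) : ℚ) + 1 ≤ ((n : ℕ) : ℚ) := by exact_mod_cast h
        nlinarith
    have hkey : (a (F n)).2 * (4 * ((n : ℕ) : ℚ) - 4 * ((n' : ℕ) : ℚ)) ^ 2
        ≤ (a (F n)).2 * 16 := mul_le_mul_of_nonpos_left hgap hbeta.le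
    nlinarith [hb1, hb2, hm3, hkey, hbeta]
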